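/- For the unit circle S¹ (with intrinsic metric of total length 2π) and any q ≥ 2, the q-extent satisfies xt_q(S¹) ≤ π·q/(2(q−1)) when q is even, attained by equally spaced points; in particular xt_2(S¹) = π and xt_4(S¹) = (2/3)π. -/

import Mathlib

open Metric

/-- Average pairwise distance of a `q`-tuple. -/
noncomputable def avgDist {X : Type*} [MetricSpace X] {q : ℕ} (x : Fin q → X) : ℝ :=
  (∑ i : Fin q, ∑ j : Fin q, if i < j then dist (x i) (x j) else 0) / (q.choose 2)

/-- The `q`-extent of a metric space: supremum of average pairwise distances. -/
noncomputable def extent (X : Type*) [MetricSpace X] (q : ℕ) : ℝ :=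
  sSup (Set.range (fun x : Fin q → X => avgDist x))

lemma round_tri (u v : ℝ) :
    |u - round u| + |v - round v| + |u + v - round (u + v)| ≤ 1 := by
  set a := u - round u with ha
  set b := v - round v with hb
  have h1 : |a| ≤ 1 / 2 := abs_sub_round u
  have h2 : |b| ≤ 1 / 2 := abs_sub_round v
  have k0 : |u + v - round (u + v)| ≤ |a + b| := by
    have := round_le (u + v) (round u + round v)
    simpa [ha, hb, sub_sub, add_comm, add_left_comm, add_assoc] using
      this.trans_eq (by push_cast; ring_nf)
  have k1 : |u + v - round (u + v)| ≤ |a + b - 1| := by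
    have := round_le (u + v) (round u + round v + 1)
    refine this.trans_eq ?_
    push_cast
    rw [ha, hb]; ring_nf
  have k2 : |u + v - round (u + v)| ≤ |a + b + 1| := by
    have := round_le (u + v) (round u + round v - 1)
    refine this.trans_eq ?_
    push_cast
    rw [ha, hb]; ring_nf
  rcases abs_cases a with ⟨e1, _⟩ | ⟨e1, _⟩ <;>
  rcases abs_cases b with ⟨e2, _⟩ | ⟨e2, _⟩ <;>
  rcases abs_cases (a + b) with ⟨e3, _⟩ | ⟨e3, _⟩ <;>
  rcases abs_cases (a + b - 1) with ⟨e4, _⟩ | ⟨e4, _⟩ <;>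
  rcases abs_cases (a + b + 1) with ⟨e5, _⟩ | ⟨e5, _⟩ <;>
  linarith

lemma distc (x y : ℝ) : dist ((x : AddCircle (2 * Real.pi))) (y : AddCircle (2 * Real.pi)) =
    (2 * Real.pi) * |(2 * Real.pi)⁻¹ * (x - y) - round ((2 * Real.pi)⁻¹ * (x - y))| := by
  have hp : (0:ℝ) < 2 * Real.pi := by positivity
  rw [dist_eq_norm, ← QuotientAddGroup.mk_sub, AddCircle.norm_eq' _ hp]

lemma circle_tri (a b c : AddCircle (2 * Real.pi)) :
    dist a b + dist b c + dist a c ≤ 2 * Real.pi := by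
  have hp : (0:ℝ) < 2 * Real.pi := by positivity
  induction a using QuotientAddGroup.induction_on with | H a =>
  induction b using QuotientAddGroup.induction_on with | H b =>
  induction c using QuotientAddGroup.induction_on with | H c =>
  rw [distc, distc, distc]
  have key := round_tri ((2 * Real.pi)⁻¹ * (a - b)) ((2 * Real.pi)⁻¹ * (b - c))
  have heq : (2 * Real.pi)⁻¹ * (a - b) + (2 * Real.pi)⁻¹ * (b - c) =
      (2 * Real.pi)⁻¹ * (a - c) := by ring
  rw [heq] at key
  nlinarith [key, hp]

theorem extent_circle : extent (AddCircle (2 * Real.pi)) 2 = Real.pi ∧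
    extent (AddCircle (2 * Real.pi)) 4 = 2 * Real.pi / 3 := by
  have hp : (0:ℝ) < 2 * Real.pi := by positivity
  have hpne : (2 * Real.pi) ≠ 0 := hp.ne'
  have hhalf : ∀ x y : AddCircle (2 * Real.pi), dist x y ≤ Real.pi := by
    intro x y
    rw [dist_eq_norm]
    calc ‖x - y‖ ≤ |2 * Real.pi| / 2 := AddCircle.norm_le_half_period _ hpne
    _ = Real.pi := by rw [abs_of_pos hp]; ring
  constructor
  · apply le_antisymm
    · apply Real.sSup_le _ Real.pi_pos.le
      rintro _ ⟨x, rfl⟩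
      simp only [avgDist, Fin.sum_univ_two]
      norm_num
      exact hhalf _ _
    · apply le_csSup
      · refine ⟨Real.pi, ?_⟩
        rintro _ ⟨x, rfl⟩
        simp only [avgDist, Fin.sum_univ_two]
        norm_num
        exact hhalf _ _
      · refine ⟨![(0 : ℝ), ((Real.pi : ℝ) : AddCircle (2 * Real.pi))], ?_⟩
        simp only [avgDist, Fin.sum_univ_two]
        norm_num
        have h2 : ((Real.pi:ℝ) : AddCircle (2*Real.pi)) = (((2*Real.pi)/2 : ℝ) : AddCircle (2*Real.pi)) := by norm_num
        rw [h2, AddCircle.norm_half_period_eq, abs_of_pos hp]; ring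
  · have tri : ∀ a b c : AddCircle (2 * Real.pi),
        dist a b + dist b c + dist a c ≤ 2 * Real.pi := circle_tri
    apply le_antisymm
    · apply Real.sSup_le _ (by positivity)
      rintro _ ⟨x, rfl⟩
      simp (config := { decide := true }) only [avgDist, Fin.sum_univ_four]
      norm_num
      have t1 := tri (x 0) (x 1) (x 2)
      have t2 := tri (x 0) (x 1) (x 3)
      have t3 := tri (x 0) (x 2) (x 3)
      have t4 := tri (x 1) (x 2) (x 3)
      have h6 : ((Nat.choose 4 2 : ℕ) : ℝ) = 6 := by norm_num [Nat.choose]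
      rw [h6]
      linarith
    · apply le_csSup
      · refine ⟨2 * Real.pi, ?_⟩
        rintro _ ⟨x, rfl⟩
        simp (config := { decide := true }) only [avgDist, Fin.sum_univ_four]
        norm_num
        have := hhalf (x 0) (x 1)
        have := hhalf (x 0) (x 2)
        have := hhalf (x 0) (x 3)
        have := hhalf (x 1) (x 2)
        have := hhalf (x 1) (x 3)
        have := hhalf (x 2) (x 3)
        have h6 : ((Nat.choose 4 2 : ℕ) : ℝ) = 6 := by norm_num [Nat.choose]
        rw [h6]
        linarith [Real.pi_pos]
      · refine ⟨![((0:ℝ) : AddCircle (2 * Real.pi)), ((Real.pi/2 : ℝ) : AddCircle (2 * Real.pi)),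
          ((Real.pi : ℝ) : AddCircle (2 * Real.pi)), ((3*Real.pi/2 : ℝ) : AddCircle (2 * Real.pi))], ?_⟩
        have hpi := Real.pi_ne_zero
        have e1 : (2 * Real.pi)⁻¹ * ((0:ℝ) - Real.pi/2) = -(1/4) := by field_simp; ring
        have e2 : (2 * Real.pi)⁻¹ * ((0:ℝ) - Real.pi) = -(1/2) := by field_simp; ring
        have e3 : (2 * Real.pi)⁻¹ * ((0:ℝ) - 3*Real.pi/2) = -(3/4) := by field_simp; ring
        have e4 : (2 * Real.pi)⁻¹ * (Real.pi/2 - Real.pi) = -(1/4) := by field_simp; ring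
        have e5 : (2 * Real.pi)⁻¹ * (Real.pi/2 - 3*Real.pi/2) = -(1/2) := by field_simp; ring
        have e6 : (2 * Real.pi)⁻¹ * (Real.pi - 3*Real.pi/2) = -(1/4) := by field_simp; ring
        simp (config := { decide := true }) only [avgDist, Fin.sum_univ_four]
        norm_num
        have harg : ∀ r : ℝ, ‖((r:ℝ) : AddCircle (2 * Real.pi))‖ =
            (2 * Real.pi) * |(2 * Real.pi)⁻¹ * r - round ((2 * Real.pi)⁻¹ * r)| :=
          fun r => AddCircle.norm_eq' _ hp
        have f1 : (2 * Real.pi)⁻¹ * (Real.pi/2) = 1/4 := by field_simp; ring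
        have f2 : (2 * Real.pi)⁻¹ * Real.pi = 1/2 := by field_simp
        have f3 : (2 * Real.pi)⁻¹ * (3*Real.pi/2) = 3/4 := by field_simp; ring
        have hn1 : ‖((Real.pi/2 : ℝ) : AddCircle (2 * Real.pi))‖ = Real.pi/2 := by
          rw [harg, f1]
          norm_num [round_eq, abs_of_nonneg]
          try ring
        have hn2 : ‖((Real.pi : ℝ) : AddCircle (2 * Real.pi))‖ = Real.pi := by
          rw [harg, f2]
          norm_num [round_eq, abs_of_nonneg]
          try ring
        have hn3 : ‖((3*Real.pi/2 : ℝ) : AddCircle (2 * Real.pi))‖ = Real.pi/2 := by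
          rw [harg, f3]
          norm_num [round_eq, abs_of_nonneg]
          try ring
        have g1 : |(-(1/4) : ℝ) - round ((-(1/4)):ℝ)| = 1/4 := by
          norm_num [round_eq]
        have g2 : |(-(1/2) : ℝ) - round ((-(1/2)):ℝ)| = 1/2 := by
          norm_num [round_eq]
        have h6 : ((Nat.choose 4 2 : ℕ) : ℝ) = 6 := by norm_num [Nat.choose]
        simp only [Matrix.cons_val]
        rw [distc, distc, distc, e4, e5, e6, hn1, hn2, hn3, g1, g2, h6]
        ring
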